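/- Let Π ⊊ Σ_k be a proper subshift containing two distinct periodic orbits, and T : Π → Σ_k the map constructed from Π. Then ω_{B_*}(T(y)) = ∅ for every y ∈ Π. -/

import Mathlib

open Filter Topology MeasureTheory

/-- Upper density of a set of naturals. -/
noncomputable def upperDensity (S : Set ℕ) : ℝ :=
  Filter.limsup (fun n => ((S ∩ Set.Iio n).ncard : ℝ) / n) Filter.atTop

/-- Lower density of a set of naturals. -/
noncomputable def lowerDensity (S : Set ℕ) : ℝ :=
  Filter.liminf (fun n => ((S ∩ Set.Iio n).ncard : ℝ) / n) Filter.atTop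

/-- Banach upper density: limsup over the interval length of the maximal
proportion of `S` in an interval of that length. -/
noncomputable def banachUpperDensity (S : Set ℕ) : ℝ :=
  Filter.limsup (fun N => ⨆ a : ℕ, ((S ∩ Set.Ico a (a + N)).ncard : ℝ) / N) Filter.atTop

/-- Banach lower density. -/
noncomputable def banachLowerDensity (S : Set ℕ) : ℝ :=
  Filter.liminf (fun N => ⨅ a : ℕ, ((S ∩ Set.Ico a (a + N)).ncard : ℝ) / N) Filter.atTop

/-- The shift map on the full shift `Σ_k = {0, …, k-1}^ℕ`. -/
def shift {k : ℕ} (x : ℕ → Fin k) : ℕ → Fin k := fun n => x (n + 1)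

/-- The metric `d(x,y) = Σ_{n ≥ 1} δ(x_n, y_n)/2^n` on `Σ_k` (sequences indexed from `0`). -/
noncomputable def shiftDist {k : ℕ} (x y : ℕ → Fin k) : ℝ :=
  ∑' n : ℕ, if x n = y n then 0 else (1 / 2) ^ (n + 1)

/-- The open ball `B_ε(x)` for the metric `shiftDist`. -/
def sball {k : ℕ} (x : ℕ → Fin k) (ε : ℝ) : Set (ℕ → Fin k) := {y | shiftDist x y < ε}

/-- `N(x, U) = {n ≥ 1 : σ^n(x) ∈ U}`. -/
def visits {k : ℕ} (x : ℕ → Fin k) (U : Set (ℕ → Fin k)) : Set ℕ :=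
  {n | 1 ≤ n ∧ shift^[n] x ∈ U}

/-- A point is recurrent if `N(x, B_ε(x)) ≠ ∅` for every `ε > 0`. -/
def Recurrent {k : ℕ} (x : ℕ → Fin k) : Prop := ∀ ε > (0 : ℝ), (visits x (sball x ε)).Nonempty

/-- A point is Banach recurrent if `N(x, B_ε(x))` has positive Banach upper density
for every `ε > 0`. -/
def BanachRecurrent {k : ℕ} (x : ℕ → Fin k) : Prop :=
  ∀ ε > (0 : ℝ), 0 < banachUpperDensity (visits x (sball x ε))

/-- Statistical ω-limit set w.r.t. a density notion `ξ`:
`ω_ξ(x) = {y : ξ(N(x, B_ε(y))) > 0 for all ε > 0}`. -/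
def statOmega {k : ℕ} (ξ : Set ℕ → ℝ) (x : ℕ → Fin k) : Set (ℕ → Fin k) :=
  {y | ∀ ε > (0 : ℝ), 0 < ξ (visits x (sball y ε))}

/-- The usual ω-limit set of `x` under the shift. -/
def omegaLim {k : ℕ} (x : ℕ → Fin k) : Set (ℕ → Fin k) :=
  {y | ∀ ε > (0 : ℝ), ∀ N : ℕ, ∃ n ≥ N, shift^[n] x ∈ sball y ε}

/-- Density of a subset of `Σ_k` w.r.t. the metric `shiftDist`. -/
def ShiftDense {k : ℕ} (A : Set (ℕ → Fin k)) : Prop :=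
  ∀ x : ℕ → Fin k, ∀ ε > (0 : ℝ), ∃ y ∈ A, shiftDist x y < ε

/-- Closure of a subset of `Σ_k` w.r.t. the metric `shiftDist`. -/
def shiftClosure {k : ℕ} (A : Set (ℕ → Fin k)) : Set (ℕ → Fin k) :=
  {z | ∀ ε > (0 : ℝ), ∃ y ∈ A, shiftDist z y < ε}

/-- `Φ^{(n)}_{xy}(t)`: the proportion of times `0 ≤ i < n` with `d(σ^i x, σ^i y) < t`. -/
noncomputable def PhiN {k : ℕ} (x y : ℕ → Fin k) (n : ℕ) (t : ℝ) : ℝ :=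
  (({i | i < n ∧ shiftDist (shift^[i] x) (shift^[i] y) < t}).ncard : ℝ) / n

/-- A pair is DC1 (distributionally chaotic of type 1) if `Φ_{xy}(s) = 0` for some `s > 0`
and `Φ*_{xy}(t) = 1` for all `t > 0`. -/
def DC1Pair {k : ℕ} (x y : ℕ → Fin k) : Prop :=
  (∃ s > (0 : ℝ), Filter.liminf (fun n => PhiN x y n s) Filter.atTop = 0) ∧
  (∀ t > (0 : ℝ), Filter.limsup (fun n => PhiN x y n t) Filter.atTop = 1)

/-- A set with at least two points is DC1-scrambled if every pair of distinct points is DC1. -/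
def DC1Scrambled {k : ℕ} (S : Set (ℕ → Fin k)) : Prop :=
  S.Nontrivial ∧ ∀ x ∈ S, ∀ y ∈ S, x ≠ y → DC1Pair x y

/-- `strictOrEq true A B` means `A ⊊ B`; `strictOrEq false A B` means `A = B`. -/
def strictOrEq {α : Type*} (b : Bool) (A B : Set α) : Prop := if b then A ⊂ B else A = B

/-- The patterns of (strict ⊊ = `true` / equality = `false`) for the three inclusions
`ω_{B_*} ⊆ ω_{d̲} ⊆ ω_{d̄} ⊆ ω_{B*}` in Cases (1)–(6). -/
def caseFlags : Fin 6 → Bool × Bool × Bool :=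
  ![(true, false, false), (true, false, true), (false, true, false),
    (true, true, false), (false, true, true), (true, true, true)]

/-- `x` satisfies Case (i), i = 1,…,6: the chain
`ω_{B_*}(x) ⊆ ω_{d̲}(x) ⊆ ω_{d̄}(x) ⊆ ω_{B*}(x) = ω_σ(x)` with strictness pattern given by
`caseFlags i`, and the last inclusion an equality. -/
def SatCase {k : ℕ} (i : Fin 6) (x : ℕ → Fin k) : Prop :=
  strictOrEq (caseFlags i).1 (statOmega banachLowerDensity x) (statOmega lowerDensity x) ∧
  strictOrEq (caseFlags i).2.1 (statOmega lowerDensity x) (statOmega upperDensity x) ∧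
  strictOrEq (caseFlags i).2.2 (statOmega upperDensity x) (statOmega banachUpperDensity x) ∧
  statOmega banachUpperDensity x = omegaLim x

/-- `x` satisfies Case (i'), i = 1,…,6: as in Case (i) but the last inclusion
`ω_{B*}(x) ⊆ ω_σ(x)` is strict. -/
def SatCase' {k : ℕ} (i : Fin 6) (x : ℕ → Fin k) : Prop :=
  strictOrEq (caseFlags i).1 (statOmega banachLowerDensity x) (statOmega lowerDensity x) ∧
  strictOrEq (caseFlags i).2.1 (statOmega lowerDensity x) (statOmega upperDensity x) ∧
  strictOrEq (caseFlags i).2.2 (statOmega upperDensity x) (statOmega banachUpperDensity x) ∧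
  statOmega banachUpperDensity x ⊂ omegaLim x
/-- A subshift: a nonempty, closed (w.r.t. the metric `shiftDist`), shift-invariant subset. -/
def IsSubshift {k : ℕ} (P : Set (ℕ → Fin k)) : Prop :=
  P.Nonempty ∧ shiftClosure P ⊆ P ∧ ∀ x ∈ P, shift x ∈ P

/-- The first `n` symbols of `y` as a finite word. -/
def prefixWord {k : ℕ} (y : ℕ → Fin k) (n : ℕ) : List (Fin k) :=
  List.ofFn (fun i : Fin n => y i)

/-- A finite word occurs in (the language of) `P` if it is the initial word of
some point of `P`. -/
def IsWordIn {k : ℕ} (w : List (Fin k)) (P : Set (ℕ → Fin k)) : Prop :=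
  ∃ x ∈ P, ∀ i : Fin w.length, x i = w.get i

/-- Data for the construction of the map `T`: an enumeration `C` of all (nonempty) finite
words of the subshift `P`, and a nonempty finite word `A1` not occurring in `P`. -/
structure TData (k : ℕ) (P : Set (ℕ → Fin k)) where
  C : ℕ → List (Fin k)
  A1 : List (Fin k)
  A1_ne : A1 ≠ []
  A1_not : ¬ IsWordIn A1 P
  C_in : ∀ n, IsWordIn (C n) P
  C_surj : ∀ w : List (Fin k), w ≠ [] → IsWordIn w P → ∃ n, C n = w

/-- The words `A_n` of the construction (indexed from `0`, so `TData.A y 0` is the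
paper's `A_1`): `A_{n+1} = A_n B_n A_n`, where `B_n = C_n Y_n ⋯ Y_n` consists of the
word `C_n` followed by `|A_n|²` copies of the initial word `Y_n` of `y` (paper's `Y_n`,
of length `n`, is `prefixWord y (n+1)` in our `0`-based indexing). -/
def TData.A {k : ℕ} {P : Set (ℕ → Fin k)} (D : TData k P) (y : ℕ → Fin k) :
    ℕ → List (Fin k)
  | 0 => D.A1
  | n + 1 =>
      D.A y n ++
        (D.C n ++ (List.replicate ((D.A y n).length ^ 2) (prefixWord y (n + 1))).flatten) ++
        D.A y n

/-- The requirement `|C_n| = o(|A_n|)` as `n → ∞`. -/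
def TData.Small {k : ℕ} {P : Set (ℕ → Fin k)} (D : TData k P) : Prop :=
  ∀ y : ℕ → Fin k,
    Filter.Tendsto (fun n => ((D.C n).length : ℝ) / ((D.A y n).length))
      Filter.atTop (nhds 0)

/-- The map `T`: `T(y) = lim_n A_n` is the sequence whose `i`-th symbol is the `i`-th
symbol of `A_n` for every large `n` (the words `A_n` are nested prefixes of each other,
and `|A_{i+1}| > i`, so the `i`-th symbol of `A_{i+1}` is well defined). -/
def TData.T {k : ℕ} {P : Set (ℕ → Fin k)} (D : TData k P) (y : ℕ → Fin k) : ℕ → Fin k :=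
  fun i => if h : i < (D.A y (i + 1)).length then (D.A y (i + 1)).get ⟨i, h⟩ else y i

-- shift iterate
lemma shift_iter {k : ℕ} (x : ℕ → Fin k) (n i : ℕ) : (shift^[n] x) i = x (n + i) := by
  induction n generalizing x with
  | zero => simp
  | succ n ih =>
    rw [Function.iterate_succ_apply, ih]
    show x (n + i + 1) = x (n + 1 + i)
    congr 1; omega

lemma shiftDist_summable {k : ℕ} (x y : ℕ → Fin k) :
    Summable (fun n : ℕ => if x n = y n then (0:ℝ) else (1/2)^(n+1)) := by
  apply Summable.of_nonneg_of_le (fun n => by positivity)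
    (f := fun n : ℕ => ((1:ℝ)/2)^n) (fun n => ?_)
    (summable_geometric_of_lt_one (by norm_num) (by norm_num))
  split_ifs
  · positivity
  · exact pow_le_pow_of_le_one (by norm_num) (by norm_num) (Nat.le_succ n)

lemma shiftDist_nonneg {k : ℕ} (x y : ℕ → Fin k) : 0 ≤ shiftDist x y :=
  tsum_nonneg fun n => by split_ifs <;> positivity

lemma shiftDist_triangle {k : ℕ} (x y z : ℕ → Fin k) :
    shiftDist x z ≤ shiftDist x y + shiftDist y z := by
  rw [shiftDist, shiftDist, shiftDist, ← Summable.tsum_add (shiftDist_summable x y) (shiftDist_summable y z)]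
  apply Summable.tsum_le_tsum _ (shiftDist_summable x z)
    ((shiftDist_summable x y).add (shiftDist_summable y z))
  intro n
  have hc : (0:ℝ) ≤ (1/2)^(n+1) := by positivity
  rcases eq_or_ne (x n) (y n) with h1 | h1 <;> rcases eq_or_ne (y n) (z n) with h2 | h2 <;>
    simp [h1, h2] <;> (try split_ifs) <;> (try positivity) <;>
      linarith [inv_nonneg.mpr (pow_nonneg (by norm_num : (0:ℝ) ≤ 2) (n+1))]

lemma shiftDist_le_of_agree {k : ℕ} (x y : ℕ → Fin k) (M : ℕ)
    (h : ∀ j < M, x j = y j) : shiftDist x y ≤ (1/2)^M := by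
  have hs := shiftDist_summable x y
  rw [shiftDist, ← Summable.sum_add_tsum_nat_add M hs]
  have h1 : ∑ i ∈ Finset.range M, (if x i = y i then (0:ℝ) else (1/2)^(i+1)) = 0 := by
    apply Finset.sum_eq_zero
    intro i hi
    rw [if_pos (h i (Finset.mem_range.mp hi))]
  rw [h1, zero_add]
  have h2 : ∑' (i : ℕ), (if x (i + M) = y (i + M) then (0:ℝ) else (1/2)^(i + M + 1))
      ≤ ∑' (i : ℕ), ((1:ℝ)/2)^(i + M + 1) := by
    have hsum2 : Summable (fun i : ℕ => ((1:ℝ)/2)^(i + M + 1)) := by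
      have : ∀ i : ℕ, ((1:ℝ)/2)^(i + M + 1) = ((1/2)^(M+1)) * ((1:ℝ)/2)^i := by
        intro i; rw [← pow_add]; ring_nf
      exact Summable.congr ((summable_geometric_of_lt_one (by norm_num)
        (by norm_num)).mul_left _) (fun i => (this i).symm)
    apply Summable.tsum_le_tsum _ ((hs.comp_injective (add_left_injective M)).congr
      (fun i => rfl)) hsum2
    intro i
    show (if x (i + M) = y (i + M) then (0:ℝ) else (1/2)^(i + M + 1)) ≤ _
    split_ifs <;> first | positivity | exact le_refl _
  refine h2.trans ?_
  have : ∀ i : ℕ, ((1:ℝ)/2)^(i + M + 1) = ((1/2)^(M+1)) * ((1:ℝ)/2)^i := by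
    intro i; rw [← pow_add]; ring_nf
  rw [tsum_congr this, tsum_mul_left, tsum_geometric_two]
  have : ((1:ℝ)/2)^(M+1) * 2 = (1/2)^M := by rw [pow_succ]; ring
  exact le_of_eq this

lemma eq_of_shiftDist_eq_zero {k : ℕ} (x y : ℕ → Fin k) (h : shiftDist x y = 0) : x = y := by
  funext n
  by_contra hne
  have hle : (if x n = y n then (0:ℝ) else (1/2)^(n+1)) ≤ shiftDist x y :=
    Summable.le_tsum (shiftDist_summable x y) n (fun m _ => by split_ifs <;> positivity)
  rw [if_neg hne, h] at hle
  have : (0:ℝ) < (1/2)^(n+1) := by positivity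
  linarith

lemma shiftDist_symm {k : ℕ} (x y : ℕ → Fin k) : shiftDist x y = shiftDist y x := by
  unfold shiftDist
  apply tsum_congr
  intro n
  simp [eq_comm]

lemma A_len_pos {k : ℕ} {P : Set (ℕ → Fin k)} (D : TData k P) (y : ℕ → Fin k) (n : ℕ) :
    0 < (D.A y n).length := by
  induction n with
  | zero => exact List.length_pos_iff.mpr D.A1_ne
  | succ n ih =>
    show 0 < (_ ++ _ ++ _ : List (Fin k)).length
    simp only [List.length_append]
    omega

lemma A_prefix_succ {k : ℕ} {P : Set (ℕ → Fin k)} (D : TData k P) (y : ℕ → Fin k) (n : ℕ) :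
    D.A y n <+: D.A y (n + 1) :=
  (List.prefix_append _ _).trans (List.prefix_append _ _)

lemma A_prefix_le {k : ℕ} {P : Set (ℕ → Fin k)} (D : TData k P) (y : ℕ → Fin k) {n m : ℕ}
    (h : n ≤ m) : D.A y n <+: D.A y m := by
  induction m with
  | zero => rw [Nat.le_zero.mp h]
  | succ m ih =>
    rcases Nat.lt_or_ge n (m+1) with h' | h'
    · exact (ih (Nat.lt_succ_iff.mp h')).trans (A_prefix_succ D y m)
    · rw [Nat.le_antisymm h h']

lemma lt_A_len {k : ℕ} {P : Set (ℕ → Fin k)} (D : TData k P) (y : ℕ → Fin k) (n : ℕ) :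
    n < (D.A y n).length := by
  induction n with
  | zero => exact A_len_pos D y 0
  | succ n ih =>
    have h1 : (D.A y (n+1)).length =
        (D.A y n).length + ((D.C n ++ (List.replicate ((D.A y n).length ^ 2)
          (prefixWord y (n + 1))).flatten)).length + (D.A y n).length := by
      show (_ ++ _ ++ _ : List (Fin k)).length = _
      simp [List.length_append]
      omega
    have h2 := A_len_pos D y n
    omega

lemma T_get {k : ℕ} {P : Set (ℕ → Fin k)} (D : TData k P) (y : ℕ → Fin k) (m i : ℕ)
    (hi : i < (D.A y m).length) : D.T y i = (D.A y m)[i] := by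
  have h1 : i < (D.A y (i+1)).length := Nat.lt_of_le_of_lt (Nat.le_succ i) (lt_A_len D y (i+1))
  show (if h : i < (D.A y (i + 1)).length then (D.A y (i + 1)).get ⟨i, h⟩ else y i) = _
  rw [dif_pos h1]
  rcases le_total (i+1) m with h | h
  · have := (A_prefix_le D y h).getElem h1
    simp [List.get_eq_getElem, this]
  · have := (A_prefix_le D y h).getElem hi
    simp [List.get_eq_getElem, this]

lemma T_eq_C {k : ℕ} {P : Set (ℕ → Fin k)} (D : TData k P) (y : ℕ → Fin k) (n t : ℕ)
    (ht : t < (D.C n).length) :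
    D.T y ((D.A y n).length + t) = (D.C n)[t] := by
  set L1 := D.A y n with hL1
  set Mid := D.C n ++ (List.replicate (L1.length ^ 2) (prefixWord y (n + 1))).flatten with hMid
  have hA : D.A y (n+1) = (L1 ++ Mid) ++ L1 := by
    show L1 ++ Mid ++ L1 = _
    rfl
  have hlt1 : L1.length + t < (L1 ++ Mid).length := by
    simp [List.length_append, hMid]
    omega
  have hlt : L1.length + t < (D.A y (n+1)).length := by
    rw [hA]; simp [List.length_append] at hlt1 ⊢; omega
  rw [T_get D y (n+1) _ hlt]
  have e1 : (D.A y (n+1))[L1.length + t]'hlt = (L1 ++ Mid)[L1.length + t]'hlt1 := by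
    simp only [hA]
    exact List.getElem_append_left hlt1
  rw [e1]
  have e2 : (L1 ++ Mid)[L1.length + t]'hlt1 = Mid[t]'(by simp [hMid]; omega) := by
    have := List.getElem_append_right (as := L1) (bs := Mid)
      (i := L1.length + t) (Nat.le_add_right _ _) (h₂ := hlt1)
    simpa using this
  rw [e2]
  exact List.getElem_append_left ht

lemma iter_mod {k : ℕ} (p : ℕ → Fin k) (m : ℕ) (hp : shift^[m] p = p) (t : ℕ) :
    shift^[t] p = shift^[t % m] p := by
  conv_lhs => rw [← Nat.mod_add_div t m]
  rw [Function.iterate_add_apply, Function.iterate_mul, Function.iterate_fixed hp]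

lemma syndetic_of_pos {k : ℕ} (x : ℕ → Fin k) (S : Set ℕ)
    (h : 0 < banachLowerDensity S) :
    ∃ N, 1 ≤ N ∧ ∀ a : ℕ, ∃ i, a ≤ i ∧ i < a + N ∧ i ∈ S := by
  by_contra hc
  push_neg at hc
  have key : ∀ N, 1 ≤ N →
      (⨅ a : ℕ, ((S ∩ Set.Ico a (a + N)).ncard : ℝ) / N) ≤ 0 := by
    intro N hN
    obtain ⟨a, ha⟩ := hc N hN
    have hemp : S ∩ Set.Ico a (a + N) = ∅ := by
      ext i
      simp only [Set.mem_inter_iff, Set.mem_Ico, Set.mem_empty_iff_false, iff_false]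
      rintro ⟨hiS, h1, h2⟩
      exact ha i h1 h2 hiS
    have : ((S ∩ Set.Ico a (a + N)).ncard : ℝ) / N = 0 := by
      rw [hemp]; simp
    calc (⨅ a : ℕ, ((S ∩ Set.Ico a (a + N)).ncard : ℝ) / N)
        ≤ ((S ∩ Set.Ico a (a + N)).ncard : ℝ) / N :=
          ciInf_le ⟨0, by rintro r ⟨b, rfl⟩; positivity⟩ a
      _ = 0 := this
  have hle : banachLowerDensity S ≤ 0 := by
    apply Filter.liminf_le_of_frequently_le
    · exact ((Filter.eventually_ge_atTop 1).mono key).frequently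
    · exact ⟨0, Filter.eventually_map.mpr (Filter.Eventually.of_forall fun N =>
        le_ciInf fun a => by positivity)⟩
  linarith

lemma exists_eq_iter {k : ℕ} {P : Set (ℕ → Fin k)} (D : TData k P) (y : ℕ → Fin k)
    (z p : ℕ → Fin k) (hp : p ∈ P) (m : ℕ) (hm : 1 ≤ m) (hper : shift^[m] p = p)
    (hz : ∀ ε > (0:ℝ), 0 < banachLowerDensity (visits (D.T y) (sball z ε))) :
    ∃ r, z = shift^[r] p := by
  set x := D.T y with hx
  -- main approximation claim
  have main : ∀ ε > (0:ℝ), ∃ r < m, shiftDist z (shift^[r] p) < ε := by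
    intro ε hε
    obtain ⟨M, hM⟩ : ∃ M : ℕ, ((1:ℝ)/2)^M < ε/2 :=
      exists_pow_lt_of_lt_one (by linarith) (by norm_num)
    obtain ⟨N, hN1, hsyn⟩ := syndetic_of_pos x _ (hz (ε/2) (by linarith))
    set L := N + M with hL
    have hL1 : 1 ≤ L := by omega
    -- the word: prefix of p of length L
    have hword : IsWordIn (prefixWord p L) P := by
      refine ⟨p, hp, fun i => ?_⟩
      rw [List.get_eq_getElem]
      simp [prefixWord]
    have hne : prefixWord p L ≠ [] := by
      simp [prefixWord]
      omega
    obtain ⟨n, hn⟩ := D.C_surj _ hne hword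
    have hClen : (D.C n).length = L := by rw [hn]; simp [prefixWord]
    set s := (D.A y n).length with hs
    obtain ⟨i, hi1, hi2, hi3, hi4⟩ := hsyn s
    set t := i - s with ht
    have hts : i = s + t := by omega
    have htN : t < N := by omega
    -- agreement of σ^i x with σ^t p on first M symbols
    have hagree : ∀ j < M, (shift^[i] x) j = (shift^[t] p) j := by
      intro j hj
      rw [shift_iter, shift_iter]
      have h1 : i + j = s + (t + j) := by omega
      have h2 : t + j < (D.C n).length := by omega
      rw [h1]
      show D.T y ((D.A y n).length + (t + j)) = p (t + j)
      rw [T_eq_C D y n (t + j) h2]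
      simp only [hn, prefixWord, List.getElem_ofFn]
    have hd1 : shiftDist (shift^[i] x) (shift^[t] p) ≤ (1/2)^M :=
      shiftDist_le_of_agree _ _ M hagree
    have hd2 : shiftDist z (shift^[i] x) < ε/2 := hi4
    have : shiftDist z (shift^[t] p) < ε := by
      calc shiftDist z (shift^[t] p)
          ≤ shiftDist z (shift^[i] x) + shiftDist (shift^[i] x) (shift^[t] p) :=
            shiftDist_triangle _ _ _
        _ < ε/2 + ε/2 := by linarith
        _ = ε := by ring
    refine ⟨t % m, Nat.mod_lt _ hm, ?_⟩
    rw [← iter_mod p m hper t]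
    exact this
  -- minimum over the finite orbit
  have hmem0 : (0:ℕ) ∈ Finset.range m := Finset.mem_range.mpr hm
  set g : ℕ → ℝ := fun r => shiftDist z (shift^[r] p) with hg
  set δ := (Finset.range m).inf' ⟨0, hmem0⟩ g with hδ
  have hδ0 : δ = 0 := by
    have hnn : 0 ≤ δ := Finset.le_inf' _ _ fun r _ => shiftDist_nonneg _ _
    have hlt : ∀ ε > (0:ℝ), δ < ε := by
      intro ε hε
      obtain ⟨r, hr, hrε⟩ := main ε hε
      exact lt_of_le_of_lt (Finset.inf'_le _ (Finset.mem_range.mpr hr)) hrε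
    by_contra hne
    have : 0 < δ := lt_of_le_of_ne hnn (Ne.symm hne)
    exact absurd (hlt δ this) (lt_irrefl δ)
  obtain ⟨r, _, hr⟩ := Finset.exists_mem_eq_inf' ⟨0, hmem0⟩ g
  refine ⟨r, eq_of_shiftDist_eq_zero z _ ?_⟩
  show g r = 0
  rw [← hr]
  exact hδ0

/-- **Remark.** If the proper subshift `P` contains two distinct periodic orbits, then
`ω_{B_*}(T(y)) = ∅` for every `y ∈ P`. -/
theorem T_image_banachLower_omega_empty (k : ℕ) (hk : 2 ≤ k)
    (P : Set (ℕ → Fin k)) (hP : IsSubshift P) (hproper : P ≠ Set.univ)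
    (hper : ∃ p ∈ P, ∃ q ∈ P, (∃ m ≥ 1, shift^[m] p = p) ∧ (∃ m ≥ 1, shift^[m] q = q) ∧
      ∀ n : ℕ, shift^[n] p ≠ q)
    (D : TData k P) (hD : D.Small) (y : ℕ → Fin k) (hy : y ∈ P) :
    statOmega banachLowerDensity (D.T y) = ∅ := by
  obtain ⟨p, hpP, q, hqP, ⟨mp, hmp, hpper⟩, ⟨mq, hmq, hqper⟩, hpq⟩ := hper
  apply Set.eq_empty_iff_forall_notMem.mpr
  intro z hzmem
  have hz : ∀ ε > (0:ℝ), 0 < banachLowerDensity (visits (D.T y) (sball z ε)) := hzmem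
  obtain ⟨r, hr⟩ := exists_eq_iter D y z p hpP mp hmp hpper hz
  obtain ⟨r', hr'⟩ := exists_eq_iter D y z q hqP mq hmq hqper hz
  have heq : shift^[r'] q = shift^[r] p := by rw [← hr, ← hr']
  have hq2 : shift^[r' * mq] q = q := by
    rw [Nat.mul_comm, Function.iterate_mul]
    exact Function.iterate_fixed hqper r'
  have hge : r' ≤ r' * mq := Nat.le_mul_of_pos_right r' hmq
  have hsplit : r' * mq = (r' * mq - r') + r' := by omega
  have hqeq : shift^[(r' * mq - r') + r] p = q := by
    rw [Function.iterate_add_apply, ← heq, ← Function.iterate_add_apply, ← hsplit]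
    exact hq2
  exact hpq _ hqeq
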